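/- (Inequality (4) of Section 5.2.2.) For every continuous function f : [−1,1] → ℝ and every integer n ≥ 1, one has (π/4)·|A_{n+1}(f)| ≤ E_n(f). -/

import Mathlib

open intervalIntegral Real MeasureTheory

lemma integral_cos_nat_mul (m : ℕ) (hm : 1 ≤ m) :
    ∫ θ in (0:ℝ)..Real.pi, Real.cos (m * θ) = 0 := by
  have hm' : (m : ℝ) ≠ 0 := Nat.cast_ne_zero.mpr (by omega)
  rw [intervalIntegral.integral_comp_mul_left Real.cos hm']
  simp [Real.sin_nat_mul_pi]

lemma integral_cos_mul_pow (k : ℕ) : ∀ m : ℕ, k < m →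
    ∫ θ in (0:ℝ)..Real.pi, Real.cos (m * θ) * Real.cos θ ^ k = 0 := by
  induction k with
  | zero =>
    intro m hm
    simpa using integral_cos_nat_mul m hm
  | succ k ih =>
    intro m hm
    have h1 : k < m + 1 := by omega
    have h2 : k < m - 1 := by omega
    have hcast : ((m - 1 : ℕ) : ℝ) = (m : ℝ) - 1 := by
      have : 1 ≤ m := by omega
      push_cast [this]; ring
    have heq : ∀ θ : ℝ, Real.cos (m * θ) * Real.cos θ ^ (k + 1)
        = (1/2) * (Real.cos ((m + 1 : ℕ) * θ) * Real.cos θ ^ k)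
          + (1/2) * (Real.cos ((m - 1 : ℕ) * θ) * Real.cos θ ^ k) := by
      intro θ
      have e1 : ((m + 1 : ℕ) : ℝ) * θ = (m : ℝ) * θ + θ := by push_cast; ring
      have e2 : ((m - 1 : ℕ) : ℝ) * θ = (m : ℝ) * θ - θ := by rw [hcast]; ring
      rw [e1, e2, Real.cos_add, Real.cos_sub, pow_succ]
      ring
    have hc : ∀ c : ℝ, Continuous fun θ : ℝ => Real.cos (c * θ) * Real.cos θ ^ k := by
      intro c; fun_prop
    rw [intervalIntegral.integral_congr (fun θ _ => heq θ),
      intervalIntegral.integral_add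
        (((hc _).intervalIntegrable _ _).const_mul _)
        (((hc _).intervalIntegrable _ _).const_mul _),
      intervalIntegral.integral_const_mul, intervalIntegral.integral_const_mul,
      ih (m + 1) h1, ih (m - 1) h2]
    ring

lemma integral_abs_cos : ∫ θ in (0:ℝ)..Real.pi, |Real.cos θ| = 2 := by
  have h1 : ∫ θ in (0:ℝ)..(Real.pi/2), |Real.cos θ| = 1 := by
    rw [intervalIntegral.integral_congr (g := Real.cos) (fun θ hθ => by
      rw [Set.uIcc_of_le (by positivity)] at hθ
      exact abs_of_nonneg (Real.cos_nonneg_of_mem_Icc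
        ⟨by linarith [hθ.1, Real.pi_pos], hθ.2⟩))]
    simp [integral_cos]
  have h2 : ∫ θ in (Real.pi/2)..Real.pi, |Real.cos θ| = 1 := by
    rw [intervalIntegral.integral_congr (g := fun θ => -Real.cos θ) (fun θ hθ => by
      rw [Set.uIcc_of_le (by linarith [Real.pi_pos])] at hθ
      rw [abs_of_nonpos (Real.cos_nonpos_of_pi_div_two_le_of_le hθ.1
        (by linarith [Real.pi_pos, hθ.2]))])]
    rw [intervalIntegral.integral_neg]
    simp [integral_cos]
  rw [← intervalIntegral.integral_add_adjacent_intervals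
    (a := 0) (b := Real.pi/2) (c := Real.pi)
    ((Real.continuous_cos.abs).intervalIntegrable _ _)
    ((Real.continuous_cos.abs).intervalIntegrable _ _), h1, h2]
  norm_num

lemma integral_abs_cos_nat_mul (m : ℕ) (hm : 1 ≤ m) :
    ∫ θ in (0:ℝ)..Real.pi, |Real.cos (m * θ)| = 2 := by
  have hm' : (m : ℝ) ≠ 0 := Nat.cast_ne_zero.mpr (by omega)
  have hper : Function.Periodic (fun x : ℝ => |Real.cos x|) Real.pi := by
    intro x; simp [Real.cos_add_pi]
  have hint : ∀ t₁ t₂ : ℝ, IntervalIntegrable (fun x : ℝ => |Real.cos x|)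
      MeasureTheory.volume t₁ t₂ := fun t₁ t₂ =>
    (Real.continuous_cos.abs).intervalIntegrable _ _
  have key : ∫ u in (0:ℝ)..((m:ℤ) • Real.pi), |Real.cos u|
      = (m:ℤ) • ∫ u in (0:ℝ)..Real.pi, |Real.cos u| := by
    have := hper.intervalIntegral_add_zsmul_eq (m:ℤ) 0 hint
    simpa using this
  rw [intervalIntegral.integral_comp_mul_left (fun u => |Real.cos u|) hm']
  rw [mul_zero, mul_comm]
  have : Real.pi * (m:ℝ) = ((m:ℤ) • Real.pi) := by rw [zsmul_eq_mul]; push_cast; ring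
  rw [this, key, integral_abs_cos]
  simp
  field_simp

lemma integral_cos_mul_poly (n : ℕ) (p : Polynomial ℝ) (hp : p.degree ≤ (n:ℕ)) :
    ∫ θ in (0:ℝ)..Real.pi, Real.cos ((n+1 : ℕ) * θ) * p.eval (Real.cos θ) = 0 := by
  have hnd : p.natDegree < n + 1 :=
    Nat.lt_succ_of_le (Polynomial.natDegree_le_iff_degree_le.mpr hp)
  have heval : ∀ x : ℝ, p.eval x = ∑ k ∈ Finset.range (n + 1), p.coeff k * x ^ k := fun x =>
    Polynomial.eval_eq_sum_range' hnd x
  calc ∫ θ in (0:ℝ)..Real.pi, Real.cos ((n+1 : ℕ) * θ) * p.eval (Real.cos θ)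
      = ∫ θ in (0:ℝ)..Real.pi, ∑ k ∈ Finset.range (n + 1),
          p.coeff k * (Real.cos ((n+1 : ℕ) * θ) * Real.cos θ ^ k) := by
        apply intervalIntegral.integral_congr
        intro θ _
        simp only [heval, Finset.mul_sum]
        congr 1; ext k; ring
    _ = ∑ k ∈ Finset.range (n + 1), ∫ θ in (0:ℝ)..Real.pi,
          p.coeff k * (Real.cos ((n+1 : ℕ) * θ) * Real.cos θ ^ k) := by
        apply intervalIntegral.integral_finset_sum
        intro k _
        exact ((continuous_const.mul ((Real.continuous_cos.comp
          (continuous_const.mul continuous_id)).mul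
          (Real.continuous_cos.pow k))).intervalIntegrable _ _)
    _ = 0 := by
        apply Finset.sum_eq_zero
        intro k hk
        rw [intervalIntegral.integral_const_mul,
          integral_cos_mul_pow k (n+1) (Finset.mem_range.mp hk), mul_zero]

/-- The `k`-th Chebyshev coefficient of `f`:
`A_k(f) = (2/π) ∫_0^π cos (kθ) f (cos θ) dθ`. -/
noncomputable def chebCoeff (f : ℝ → ℝ) (k : ℕ) : ℝ :=
  (2 / Real.pi) * ∫ θ in (0 : ℝ)..Real.pi, Real.cos (k * θ) * f (Real.cos θ)

/-- `E_n(f)`: the distance in sup norm on `[-1,1]` from `f` to polynomials of degree `≤ n`. -/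
noncomputable def bestApprox (f : ℝ → ℝ) (n : ℕ) : ℝ :=
  sInf {e : ℝ | ∃ p : Polynomial ℝ, p.degree ≤ (n : ℕ) ∧
    e = ⨆ x : Set.Icc (-1 : ℝ) 1, |f x.1 - p.eval x.1|}

/-- Inequality (4) of Section 5.2.2: `(π/4)·|A_{n+1}(f)| ≤ E_n(f)`. -/
theorem chebCoeff_le_bestApprox (f : ℝ → ℝ)
    (hf : ContinuousOn f (Set.Icc (-1 : ℝ) 1)) (n : ℕ) (hn : 1 ≤ n) :
    Real.pi / 4 * |chebCoeff f (n + 1)| ≤ bestApprox f n := by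
  have hpi := Real.pi_pos
  unfold bestApprox
  apply le_csInf
  · exact ⟨_, 0, by simp, rfl⟩
  · rintro e ⟨p, hp, rfl⟩
    set M := ⨆ x : Set.Icc (-1:ℝ) 1, |f x.1 - p.eval x.1| with hMdef
    have hconth : ContinuousOn (fun x => |f x - p.eval x|) (Set.Icc (-1:ℝ) 1) :=
      (hf.sub (Polynomial.continuous p).continuousOn).abs
    have hbdd : BddAbove (Set.range fun x : Set.Icc (-1:ℝ) 1 => |f x.1 - p.eval x.1|) := by
      obtain ⟨C, hC⟩ := (isCompact_Icc.image_of_continuousOn hconth).bddAbove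
      refine ⟨C, ?_⟩
      rintro y ⟨x, rfl⟩
      exact hC ⟨x.1, x.2, rfl⟩
    have hMle : ∀ y ∈ Set.Icc (-1:ℝ) 1, |f y - p.eval y| ≤ M := fun y hy =>
      le_ciSup hbdd ⟨y, hy⟩
    have hcos_mem : ∀ θ : ℝ, Real.cos θ ∈ Set.Icc (-1:ℝ) 1 := fun θ =>
      ⟨Real.neg_one_le_cos θ, Real.cos_le_one θ⟩
    have hgf : Continuous fun θ : ℝ => f (Real.cos θ) := by
      rw [← continuousOn_univ]
      exact hf.comp Real.continuous_cos.continuousOn (fun x _ => hcos_mem x)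
    have hcm : Continuous fun θ : ℝ => Real.cos ((n+1:ℕ) * θ) := by fun_prop
    have hint1 : IntervalIntegrable (fun θ => Real.cos ((n+1:ℕ)*θ) * f (Real.cos θ))
        volume 0 Real.pi := (hcm.mul hgf).intervalIntegrable _ _
    have hint2 : IntervalIntegrable (fun θ => Real.cos ((n+1:ℕ)*θ) * p.eval (Real.cos θ))
        volume 0 Real.pi :=
      (hcm.mul ((Polynomial.continuous p).comp Real.continuous_cos)).intervalIntegrable _ _
    have hsplit : ∫ θ in (0:ℝ)..Real.pi, Real.cos ((n+1:ℕ)*θ) * f (Real.cos θ)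
        = ∫ θ in (0:ℝ)..Real.pi,
          Real.cos ((n+1:ℕ)*θ) * (f (Real.cos θ) - p.eval (Real.cos θ)) := by
      have heq : (fun θ => Real.cos ((n+1:ℕ)*θ) * (f (Real.cos θ) - p.eval (Real.cos θ)))
          = fun θ => Real.cos ((n+1:ℕ)*θ) * f (Real.cos θ)
            - Real.cos ((n+1:ℕ)*θ) * p.eval (Real.cos θ) := by
        funext θ; ring
      rw [heq, intervalIntegral.integral_sub hint1 hint2, integral_cos_mul_poly n p hp,
        sub_zero]
    have hbound : |∫ θ in (0:ℝ)..Real.pi,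
        Real.cos ((n+1:ℕ)*θ) * (f (Real.cos θ) - p.eval (Real.cos θ))| ≤ 2 * M := by
      calc |∫ θ in (0:ℝ)..Real.pi,
            Real.cos ((n+1:ℕ)*θ) * (f (Real.cos θ) - p.eval (Real.cos θ))|
          ≤ ∫ θ in (0:ℝ)..Real.pi,
            |Real.cos ((n+1:ℕ)*θ) * (f (Real.cos θ) - p.eval (Real.cos θ))| :=
            intervalIntegral.abs_integral_le_integral_abs (le_of_lt hpi)
        _ ≤ ∫ θ in (0:ℝ)..Real.pi, |Real.cos ((n+1:ℕ)*θ)| * M := by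
            apply intervalIntegral.integral_mono_on (le_of_lt hpi)
              ((hcm.mul (hgf.sub ((Polynomial.continuous p).comp
                Real.continuous_cos))).abs.intervalIntegrable _ _)
              ((hcm.abs.mul continuous_const).intervalIntegrable _ _)
            intro θ _
            simp only [Pi.mul_apply, Pi.sub_apply, Function.comp_apply]
            rw [abs_mul]
            exact mul_le_mul_of_nonneg_left (hMle _ (hcos_mem θ)) (abs_nonneg _)
        _ = 2 * M := by
            rw [intervalIntegral.integral_mul_const,
              integral_abs_cos_nat_mul (n+1) (by omega)]
    have hA : chebCoeff f (n+1) = (2/Real.pi) * ∫ θ in (0:ℝ)..Real.pi,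
        Real.cos ((n+1:ℕ)*θ) * (f (Real.cos θ) - p.eval (Real.cos θ)) := by
      rw [chebCoeff, hsplit]
    rw [hA, abs_mul, abs_of_nonneg (by positivity : (0:ℝ) ≤ 2/Real.pi)]
    calc Real.pi/4 * (2/Real.pi * |∫ θ in (0:ℝ)..Real.pi,
          Real.cos ((n+1:ℕ)*θ) * (f (Real.cos θ) - p.eval (Real.cos θ))|)
        ≤ Real.pi/4 * (2/Real.pi * (2*M)) := by
          apply mul_le_mul_of_nonneg_left
            (mul_le_mul_of_nonneg_left hbound (by positivity)) (by positivity)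
      _ = M := by field_simp; ring
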